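/- Let G ≥ 2, r > 0, r ≠ 1, and p^F ∈ [0,1]. For 1 ≤ s ≤ G-1 define V1(s) = p^F + (1-p^F)·(1-r^{s-1})/(1-r^{G-1}) and V0(s) = (1-r^s)/(1-r^G). Then |V1(s) - V0(s)| = ((r^{G-1} - r^{s-1})/(r^{G-1} - 1)) · |p^F - (1-r)/(1-r^G)|. -/

import Mathlib

theorem stmt_4 (G : ℕ) (hG : 2 ≤ G) (r : ℝ) (hr : 0 < r) (hr1 : r ≠ 1)
    (pF : ℝ) (hpF : 0 ≤ pF) (hpF1 : pF ≤ 1) :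
    ∀ s, 1 ≤ s → s ≤ G - 1 →
      |(pF + (1 - pF) * (1 - r ^ (s - 1)) / (1 - r ^ (G - 1))) -
          (1 - r ^ s) / (1 - r ^ G)| =
        ((r ^ (G - 1) - r ^ (s - 1)) / (r ^ (G - 1) - 1)) *
          |pF - (1 - r) / (1 - r ^ G)| := by
  intro s hs hsG
  obtain ⟨g, rfl⟩ : ∃ g, G = g + 2 := ⟨G - 2, by omega⟩
  obtain ⟨a, rfl⟩ : ∃ a, s = a + 1 := ⟨s - 1, by omega⟩
  have hag : a < g + 1 := by omega
  simp only [Nat.add_sub_cancel, show g + 2 - 1 = g + 1 from rfl]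
  have h1 : r ^ (g + 2) = r * r ^ (g + 1) := by ring
  have h2 : r ^ (a + 1) = r * r ^ a := by ring
  -- key inequalities
  have hA1 : r ^ (g + 1) ≠ 1 := by
    rcases lt_or_gt_of_ne hr1 with h | h
    · exact ne_of_lt (pow_lt_one₀ hr.le h (by omega))
    · exact ne_of_gt (one_lt_pow₀ h (by omega))
  have hG1 : r ^ (g + 2) ≠ 1 := by
    rcases lt_or_gt_of_ne hr1 with h | h
    · exact ne_of_lt (pow_lt_one₀ hr.le h (by omega))
    · exact ne_of_gt (one_lt_pow₀ h (by omega))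
  have hcnn : 0 ≤ (r ^ (g + 1) - r ^ a) / (r ^ (g + 1) - 1) := by
    rcases lt_or_gt_of_ne hr1 with h | h
    · have hlt : r ^ (g + 1) < r ^ a := pow_lt_pow_right_of_lt_one₀ hr h hag
      have hlt1 : r ^ (g + 1) < 1 := pow_lt_one₀ hr.le h (by omega)
      have := div_nonneg (sub_nonneg.mpr hlt.le) (sub_nonneg.mpr hlt1.le)
      calc (0:ℝ) ≤ (r ^ a - r ^ (g+1)) / (1 - r ^ (g+1)) := this
        _ = (r ^ (g + 1) - r ^ a) / (r ^ (g + 1) - 1) := by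
            rw [← neg_div_neg_eq]; ring_nf
    · have hlt : r ^ a < r ^ (g + 1) := pow_lt_pow_right₀ h hag
      have hlt1 : 1 < r ^ (g + 1) := one_lt_pow₀ h (by omega)
      exact div_nonneg (sub_nonneg.mpr hlt.le) (sub_nonneg.mpr hlt1.le)
  have hid : (pF + (1 - pF) * (1 - r ^ a) / (1 - r ^ (g + 1))) -
      (1 - r ^ (a + 1)) / (1 - r ^ (g + 2)) =
      ((r ^ (g + 1) - r ^ a) / (r ^ (g + 1) - 1)) *
        (pF - (1 - r) / (1 - r ^ (g + 2))) := by
    rw [h1, h2]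
    have hA1' : 1 - r ^ (g + 1) ≠ 0 := fun h => hA1 (by linarith [sub_eq_zero.mp h])
    have hG1' : 1 - r * r ^ (g + 1) ≠ 0 := fun h => hG1 (by rw [h1]; linarith [sub_eq_zero.mp h])
    have hA1'' : r ^ (g + 1) - 1 ≠ 0 := fun h => hA1 (by linarith [sub_eq_zero.mp h])
    have hG1'' : 1 - r ^ (g + 1) * r ≠ 0 := by rwa [mul_comm]
    field_simp
    ring
  rw [hid, abs_mul, abs_of_nonneg hcnn]
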